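/- Let A(x₁,x₂) = (x₁-x₂)², B(x₁,x₂) = 2x₁x₂(x₁+x₂) + 2a·x₁x₂ + b(x₁+x₂) + 2c, C(x₁,x₂) = x₁²x₂² - b·x₁x₂ - 2c(x₁+x₂) + b²/4 - a·c, and P(x) = 2x³ + a·x² + b·x + c. Then B(x₁,x₂)² - 4·A(x₁,x₂)·C(x₁,x₂) = 4·P(x₁)·P(x₂). -/
import Mathlib


theorem stmt_2 (R : Type*) [Field R] [CharZero R] (a b c x₁ x₂ : R)
    (A B C : R → R → R) (P : R → R)
    (hA : ∀ y₁ y₂, A y₁ y₂ = (y₁ - y₂)^2)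
    (hB : ∀ y₁ y₂, B y₁ y₂ = 2*y₁*y₂*(y₁+y₂) + 2*a*y₁*y₂ + b*(y₁+y₂) + 2*c)
    (hC : ∀ y₁ y₂, C y₁ y₂ = y₁^2*y₂^2 - b*y₁*y₂ - 2*c*(y₁+y₂) + b^2/4 - a*c)
    (hP : ∀ x, P x = 2*x^3 + a*x^2 + b*x + c) :
    (B x₁ x₂)^2 - 4 * A x₁ x₂ * C x₁ x₂ = 4 * P x₁ * P x₂ := by simp only [hA,hB,hC,hP]; ring
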